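/- For a crossed module [φ : G₂ → G₁], the inclusion G₁ → G₁ ⋊ G₂, g ↦ (g, 1), together with s and t, makes the associated groupoid (objects G₁, arrows G₁ ⋊ G₂) into a group object in the category of groupoids: the group multiplications on objects and arrows are functorial with respect to the groupoid structure. -/

import Mathlib

/-- A crossed module `[φ : G₂ → G₁]`: a group homomorphism `φ` together with a
right action of `G₁` on `G₂` (written `act β a` for `β^a`) satisfying
(CM1) `β^{φ α} = α⁻¹ β α` and (CM2) `φ (β^a) = a⁻¹ (φ β) a`. -/
structure CrossedModule (G₁ G₂ : Type*) [Group G₁] [Group G₂] where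
  φ : G₂ →* G₁
  act : G₂ → G₁ → G₂
  act_one : ∀ β : G₂, act β 1 = β
  act_mul : ∀ (β : G₂) (a b : G₁), act β (a * b) = act (act β a) b
  mul_act : ∀ (α β : G₂) (a : G₁), act (α * β) a = act α a * act β a
  cm1 : ∀ α β : G₂, act β (φ α) = α⁻¹ * β * α
  cm2 : ∀ (β : G₂) (a : G₁), φ (act β a) = a⁻¹ * φ β * a

/-- The semidirect product multiplication `(g, α)(h, β) = (gh, α^h β)` on `G₁ × G₂`. -/
def sdMul {G₁ G₂ : Type*} [Group G₁] [Group G₂] (M : CrossedModule G₁ G₂)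
    (p q : G₁ × G₂) : G₁ × G₂ :=
  (p.1 * q.1, M.act p.2 q.1 * q.2)

lemma CrossedModule.one_act {G₁ G₂ : Type*} [Group G₁] [Group G₂]
    (M : CrossedModule G₁ G₂) (a : G₁) : M.act 1 a = 1 := by
  have h := M.mul_act 1 1 a
  rw [mul_one] at h
  exact (mul_eq_left.mp h.symm)

/-- for a crossed module, the associated groupoid (objects `G₁`,
arrows `G₁ ⋊ G₂`, `s (g,α) = g`, `t (g,α) = g φ α`, identity `g ↦ (g,1)`,
composition of `(g,α)` and `(gφα,β)` equal to `(g,αβ)`) is a group object in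
groupoids: `s` and `t` are group homomorphisms, the identity-assigning map is a
group homomorphism, and group multiplication of arrows commutes with composition
(interchange law). -/
theorem crossedModule_groupObject {G₁ G₂ : Type*} [Group G₁] [Group G₂]
    (M : CrossedModule G₁ G₂) :
    -- s is a group homomorphism
    (∀ p q : G₁ × G₂, (sdMul M p q).1 = p.1 * q.1) ∧
    -- t is a group homomorphism
    (∀ p q : G₁ × G₂,
      (sdMul M p q).1 * M.φ (sdMul M p q).2 = (p.1 * M.φ p.2) * (q.1 * M.φ q.2)) ∧
    -- g ↦ (g, 1) is a group homomorphism: (g,1)(h,1) = (gh,1)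
    (∀ g h : G₁, sdMul M (g, 1) (h, 1) = (g * h, 1)) ∧
    -- interchange: the product of the composites of the composable pairs
    -- ((g,α), (gφα,β)) and ((h,γ), (hφγ,δ)), namely (g,αβ)(h,γδ), equals the
    -- composite of the products (g,α)(h,γ) and (gφα,β)(hφγ,δ); first, the
    -- products are again composable:
    (∀ (g h : G₁) (α γ : G₂),
      (sdMul M (g, α) (h, γ)).1 * M.φ (sdMul M (g, α) (h, γ)).2
        = (sdMul M (g * M.φ α, 1) (h * M.φ γ, 1)).1) ∧
    -- ... and the interchange law holds:
    (∀ (g h : G₁) (α β γ δ : G₂),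
      sdMul M (g, α * β) (h, γ * δ)
        = ((sdMul M (g, α) (h, γ)).1,
            (sdMul M (g, α) (h, γ)).2 * (sdMul M (g * M.φ α, β) (h * M.φ γ, δ)).2)) := by
  refine ⟨fun p q => rfl, fun p q => ?_, fun g h => ?_, fun g h α γ => ?_,
    fun g h α β γ δ => ?_⟩
  · simp [sdMul, M.cm2]; group
  · simp [sdMul, M.act_one, M.one_act]
  · simp [sdMul, M.act_one, M.cm2, M.cm1]; group
  · simp [sdMul, M.mul_act, M.act_mul, M.cm1]; group
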